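/- Let A be a unital C*-algebra, let φ be a positive linear functional on A with φ(1) ≤ 1, let p ∈ A be a projection, and let a ∈ A with 0 ≤ a ≤ 1. Then (φ(p a² p))² ≤ φ((p a p)²). -/

import Mathlib

open ComplexOrder

/-- For a positive linear functional `φ` with `φ(1) ≤ 1` on a unital C*-algebra, a
projection `p`, and `a` with `0 ≤ a ≤ 1`: `(φ(p a² p))² ≤ φ((p a p)²)`. -/
theorem stmt2 {A : Type*} [CStarAlgebra A] [PartialOrder A] [StarOrderedRing A]
    (φ : A →ₗ[ℂ] ℂ) (hφ : ∀ b : A, 0 ≤ b → 0 ≤ φ b) (hφ1 : φ 1 ≤ 1)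
    (p : A) (hp_sa : p = star p) (hp_idem : p * p = p)
    (a : A) (ha0 : 0 ≤ a) (ha1 : a ≤ 1) :
    φ (p * a ^ 2 * p) ^ 2 ≤ φ ((p * a * p) ^ 2) := by
  have hφmono : ∀ x y : A, x ≤ y → φ x ≤ φ y := fun x y hxy => by
    have := hφ (y - x) (sub_nonneg.mpr hxy)
    rw [map_sub] at this
    exact sub_nonneg.mp this
  set b := p * a * p with hb
  have hb_nonneg : 0 ≤ b := by
    have := star_left_conjugate_nonneg ha0 p
    rwa [← hp_sa] at this
  have hb_sa : star b = b := IsSelfAdjoint.of_nonneg hb_nonneg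
  set t := φ b with htdef
  have ht0 : 0 ≤ t := hφ b hb_nonneg
  have ht_conj : star t = t := Complex.conj_eq_iff_im.mpr (by
    exact (Complex.nonneg_iff.mp ht0).2.symm)
  -- a^2 ≤ a
  have ha2 : a ^ 2 ≤ a := by
    simpa using CStarAlgebra.pow_antitone ha0 ha1 (le_of_lt one_lt_two)
  -- step 1 : φ (p * a^2 * p) ≤ t
  have h1 : φ (p * a ^ 2 * p) ≤ t := by
    apply hφmono
    have := star_left_conjugate_le_conjugate ha2 p
    rwa [← hp_sa] at this
  have h0 : 0 ≤ φ (p * a ^ 2 * p) := by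
    apply hφ
    have := star_left_conjugate_nonneg (CStarAlgebra.pow_nonneg ha0 2) p
    rwa [← hp_sa] at this
  -- step 2 : t^2 ≤ φ (b^2)  (Cauchy–Schwarz with y = 1)
  have h2 : t ^ 2 ≤ φ (b ^ 2) := by
    have hx : (0 : ℂ) ≤ φ (star (b - t • 1) * (b - t • 1)) :=
      hφ _ (star_mul_self_nonneg _)
    have hexp : star (b - t • 1) * (b - t • 1)
        = b ^ 2 - t • b - t • b + (t * t) • (1 : A) := by
      rw [star_sub, hb_sa, star_smul, star_one, ht_conj]
      simp only [← hb, sub_mul, mul_sub, smul_mul_assoc, mul_smul_comm, smul_smul, sq, mul_one, one_mul, smul_sub, smul_add, neg_smul, smul_neg, one_smul]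
      abel
    rw [hexp] at hx
    simp only [map_add, map_sub, map_smul, smul_eq_mul] at hx
    have ht2 : t * t * φ 1 ≤ t * t * 1 :=
      mul_le_mul_of_nonneg_left hφ1 (mul_nonneg ht0 ht0)
    calc t ^ 2 = t * t * 1 - (t * t * 1 - t * t) := by ring
    _ ≤ φ (b ^ 2) := by
        have : 0 ≤ φ (b ^ 2) - t * t - t * t + t * t * φ 1 := hx
        have h3 : t * t * φ 1 ≤ t * t := by simpa using ht2
        -- combine
        have := add_le_add_right h3 (φ (b ^ 2) - t * t - t * t)
        -- 0 ≤ φ(b^2) - 2 t² + t² φ 1 and t² φ 1 ≤ t² give t² ≤ φ(b^2)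
        calc t * t * 1 - (t * t * 1 - t * t) = t * t := by ring
        _ = 0 + (t * t) := by ring
        _ ≤ (φ (b ^ 2) - t * t - t * t + t * t * φ 1) + (t * t) := add_le_add hx le_rfl
        _ = (φ (b ^ 2) - t * t) + t * t * φ 1 := by ring
        _ ≤ (φ (b ^ 2) - t * t) + t * t := add_le_add le_rfl h3
        _ = φ (b ^ 2) := by ring
  calc φ (p * a ^ 2 * p) ^ 2 ≤ t ^ 2 := pow_le_pow_left₀ h0 h1 2
  _ ≤ φ (b ^ 2) := h2
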